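/- Every strong-local *-automorphism on a von Neumann algebra is a unital Jordan *-homomorphism. In particular, if T : M → M is linear and for every a ∈ M and every normal state φ there exists a *-automorphism π_{a,φ} of M with φ((T(a) − π_{a,φ}(a))* (T(a) − π_{a,φ}(a))) = 0, then T(u) is unitary for every unitary u ∈ M, T maps projections to projections, T(a*) = T(a)*, and T(a²) = T(a)² for all a ∈ M. -/

import Mathlib

open scoped ComplexOrder InnerProductSpace

set_option synthInstance.maxHeartbeats 1000000
set_option maxHeartbeats 2000000
set_option linter.unusedVariables false
set_option linter.unusedSectionVars false

variable {H : Type*} [NormedAddCommGroup H] [InnerProductSpace ℂ H] [CompleteSpace H]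

instance : SMulMemClass (VonNeumannAlgebra H) ℂ (H →L[ℂ] H) :=
  ⟨fun {s} c {x} hx => s.toStarSubalgebra.smul_mem hx c⟩

/-- A normal state on `B(H)`, given in density-matrix form `φ(x) = ∑ ⟨x ξₙ, ξₙ⟩` with
`∑ ‖ξₙ‖² = 1`.  The normal states of a von Neumann algebra `M ⊆ B(H)` are exactly the
restrictions to `M` of such functionals. -/
def IsNormalState (φ : (H →L[ℂ] H) → ℂ) : Prop :=
  ∃ ξ : ℕ → H, (∑' n, ‖ξ n‖ ^ 2) = 1 ∧ ∀ x : H →L[ℂ] H, φ x = ∑' n, ⟪ξ n, x (ξ n)⟫_ℂ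

/-- A derivation on the von Neumann algebra `M`. -/
def IsDerivationOn (M : VonNeumannAlgebra H) (D : ↥M → ↥M) : Prop :=
  IsLinearMap ℂ D ∧ ∀ a b : ↥M, D (a * b) = D a * b + a * D b

/-- A weak*-local derivation on the von Neumann algebra `M`: a linear map agreeing with some
derivation at each point, up to each normal state. -/
def IsWeakStarLocalDerivation (M : VonNeumannAlgebra H) (T : ↥M → ↥M) : Prop :=
  IsLinearMap ℂ T ∧ ∀ (a : ↥M) (φ : (H →L[ℂ] H) → ℂ), IsNormalState φ →
    ∃ D : ↥M → ↥M, IsDerivationOn M D ∧ φ ↑(T a) = φ ↑(D a)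

/-- A strong-local `*`-automorphism on the von Neumann algebra `M`: a linear map agreeing
with some `*`-automorphism at each point, up to the seminorm `|||x|||_φ = φ(x*x)^{1/2}` of each
normal state `φ`. -/
def IsStrongLocalStarAut (M : VonNeumannAlgebra H) (T : ↥M → ↥M) : Prop :=
  IsLinearMap ℂ T ∧ ∀ (a : ↥M) (φ : (H →L[ℂ] H) → ℂ), IsNormalState φ →
    ∃ π : ↥M ≃⋆ₐ[ℂ] ↥M, φ ↑(star (T a - π a) * (T a - π a)) = 0

namespace SLSAProof

variable {M : VonNeumannAlgebra H}

instance : CStarRing ↥M :=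
  ⟨fun {x} => le_of_eq (CStarRing.norm_star_mul_self (x := (x : H →L[ℂ] H))).symm⟩

lemma isClosed_centralizer (s : Set (H →L[ℂ] H)) : IsClosed (Set.centralizer s) := by
  have h : Set.centralizer s = ⋂ a ∈ s, {x : H →L[ℂ] H | a * x = x * a} := by
    ext x
    simp only [Set.mem_centralizer_iff, Set.mem_iInter, Set.mem_setOf_eq]
  rw [h]
  exact isClosed_biInter fun a _ => isClosed_eq (continuous_const.mul continuous_id)
    (continuous_id.mul continuous_const)

lemma isClosed_coe (M : VonNeumannAlgebra H) : IsClosed ((M : Set (H →L[ℂ] H))) := by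
  rw [← M.centralizer_centralizer]; exact isClosed_centralizer _

instance : CompleteSpace ↥M := (isClosed_coe M).completeSpace_coe

noncomputable instance : CStarAlgebra ↥M :=
  { (inferInstance : NormedRing ↥M), (inferInstance : StarRing ↥M),
    (inferInstance : CStarRing ↥M), (inferInstance : NormedAlgebra ℂ ↥M),
    (inferInstance : StarModule ℂ ↥M), (inferInstance : CompleteSpace ↥M) with }

lemma real_smul_eq (t : ℝ) (b : ↥M) : (t : ℂ) • b = t • b := by
  rw [← smul_one_smul ℂ t b, Complex.real_smul, mul_one]

lemma star_real_smul (t : ℝ) (b : ↥M) : star (t • b) = t • star b := by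
  rw [← real_smul_eq, star_smul, ← real_smul_eq]; simp

/-- two operators with the same quadratic form are equal (complex). -/
lemma eq_of_inner (A B : H →L[ℂ] H) (h : ∀ ξ, ⟪A ξ, ξ⟫_ℂ = ⟪B ξ, ξ⟫_ℂ) : A = B := by
  have h0 : ∀ ξ, ⟪(A - B) ξ, ξ⟫_ℂ = 0 := by
    intro ξ; simp only [ContinuousLinearMap.sub_apply, inner_sub_left, h, sub_self]
  have := (inner_map_self_eq_zero ((A - B : H →L[ℂ] H) : H →ₗ[ℂ] H)).mp h0
  have h2 : (A - B) = 0 := by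
    ext ξ; exact congrFun (congrArg DFunLike.coe this) ξ
  exact sub_eq_zero.mp h2

/-- Key: `T a` agrees with some automorphism at any two prescribed vectors. -/
lemma exists_aut {T : ↥M → ↥M} (hT : IsStrongLocalStarAut M T) (a : ↥M) (ξ η : H) :
    ∃ π : ↥M ≃⋆ₐ[ℂ] ↥M, (T a : H →L[ℂ] H) ξ = (π a : H →L[ℂ] H) ξ ∧
      (T a : H →L[ℂ] H) η = (π a : H →L[ℂ] H) η := by
  rcases eq_or_ne (‖ξ‖ ^ 2 + ‖η‖ ^ 2) 0 with h0 | hne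
  · have hξn : ‖ξ‖ = 0 := by nlinarith [sq_nonneg ‖ξ‖, sq_nonneg ‖η‖, norm_nonneg ξ, norm_nonneg η]
    have hηn : ‖η‖ = 0 := by nlinarith [sq_nonneg ‖ξ‖, sq_nonneg ‖η‖, norm_nonneg ξ, norm_nonneg η]
    have hξ : ξ = 0 := norm_eq_zero.mp hξn
    have hη : η = 0 := norm_eq_zero.mp hηn
    exact ⟨StarAlgEquiv.refl _ _, by simp [hξ, hη]⟩
  · set r : ℝ := ‖ξ‖ ^ 2 + ‖η‖ ^ 2 with hrdef
    have hr : 0 < r := lt_of_le_of_ne (by positivity) (Ne.symm hne)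
    set c : ℝ := (Real.sqrt r)⁻¹ with hcdef
    have hc : c ≠ 0 := by positivity
    set ζ : ℕ → H := fun n => if n = 0 then c • ξ else if n = 1 then c • η else 0 with hζ
    have hsupp : ∀ n ∉ ({0, 1} : Finset ℕ), ‖ζ n‖ ^ 2 = 0 := by
      intro n hn
      simp only [Finset.mem_insert, Finset.mem_singleton, not_or] at hn
      simp [hζ, hn.1, hn.2]
    have hsum : (∑' n, ‖ζ n‖ ^ 2) = 1 := by
      rw [tsum_eq_sum hsupp]
      have : ({0, 1} : Finset ℕ).sum (fun n => ‖ζ n‖ ^ 2) = ‖ζ 0‖ ^ 2 + ‖ζ 1‖ ^ 2 := by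
        simp
      rw [this]
      have hcs : c ^ 2 = r⁻¹ := by
        rw [hcdef, ← Real.sqrt_inv]
        exact Real.sq_sqrt (by positivity)
      have hz0 : ζ 0 = c • ξ := by simp [hζ]
      have hz1 : ζ 1 = c • η := by simp [hζ]
      rw [hz0, hz1, norm_smul, norm_smul, Real.norm_eq_abs, mul_pow, mul_pow, sq_abs, hcs,
        ← mul_add, ← hrdef, inv_mul_cancel₀ hne]
    set φ : (H →L[ℂ] H) → ℂ := fun x => ∑' n, ⟪ζ n, x (ζ n)⟫_ℂ with hφ
    obtain ⟨π, hπ⟩ := hT.2 a φ ⟨ζ, hsum, fun x => rfl⟩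
    set y : ↥M := T a - π a with hy
    set A : H →L[ℂ] H := (y : H →L[ℂ] H) with hA
    have hterm : ∀ n, ⟪ζ n, ((star y * y : ↥M) : H →L[ℂ] H) (ζ n)⟫_ℂ
        = (‖A (ζ n)‖ : ℂ) ^ 2 := by
      intro n
      have hco : ((star y * y : ↥M) : H →L[ℂ] H) = star A * A := by
        rw [MulMemClass.coe_mul]; rfl
      rw [hco, ContinuousLinearMap.mul_apply, ContinuousLinearMap.star_eq_adjoint,
        ContinuousLinearMap.adjoint_inner_right]
      exact inner_self_eq_norm_sq_to_K (𝕜 := ℂ) _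
    have hzero : (‖A (ζ 0)‖ : ℂ) ^ 2 + (‖A (ζ 1)‖ : ℂ) ^ 2 = 0 := by
      have hsupp2 : ∀ n ∉ ({0, 1} : Finset ℕ),
          ⟪ζ n, ((star y * y : ↥M) : H →L[ℂ] H) (ζ n)⟫_ℂ = 0 := by
        intro n hn
        simp only [Finset.mem_insert, Finset.mem_singleton, not_or] at hn
        simp [hζ, hn.1, hn.2]
      have this : (∑' n, ⟪ζ n, ((star y * y : ↥M) : H →L[ℂ] H) (ζ n)⟫_ℂ) = 0 := hπ
      rw [tsum_eq_sum hsupp2] at this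
      rw [Finset.sum_insert (by norm_num), Finset.sum_singleton, hterm 0, hterm 1] at this
      exact this
    have hre : ‖A (ζ 0)‖ ^ 2 + ‖A (ζ 1)‖ ^ 2 = 0 := by
      have hzero' : ((‖A (ζ 0)‖ ^ 2 + ‖A (ζ 1)‖ ^ 2 : ℝ) : ℂ) = 0 := by
        push_cast
        exact hzero
      exact_mod_cast hzero' 
    have h0 : A (ζ 0) = 0 := by
      have : ‖A (ζ 0)‖ ^ 2 = 0 := by nlinarith [sq_nonneg ‖A (ζ 0)‖, sq_nonneg ‖A (ζ 1)‖]
      simpa using norm_eq_zero.mp (pow_eq_zero_iff (n := 2) (by norm_num) |>.mp this)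
    have h1 : A (ζ 1) = 0 := by
      have : ‖A (ζ 1)‖ ^ 2 = 0 := by nlinarith [sq_nonneg ‖A (ζ 0)‖, sq_nonneg ‖A (ζ 1)‖]
      simpa using norm_eq_zero.mp (pow_eq_zero_iff (n := 2) (by norm_num) |>.mp this)
    have hAξ : A ξ = 0 := by
      have : A (c • ξ) = 0 := by simpa [hζ] using h0
      rw [ContinuousLinearMap.map_smul_of_tower] at this
      exact (smul_eq_zero.mp this).resolve_left (by exact_mod_cast hc)
    have hAη : A η = 0 := by
      have : A (c • η) = 0 := by simpa [hζ] using h1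
      rw [ContinuousLinearMap.map_smul_of_tower] at this
      exact (smul_eq_zero.mp this).resolve_left (by exact_mod_cast hc)
    have hsub : A = ((T a : H →L[ℂ] H)) - ((π a : H →L[ℂ] H)) := by
      rw [hA, hy]; exact AddSubgroupClass.coe_sub _ _
    refine ⟨π, ?_, ?_⟩
    · have := hAξ; rw [hsub] at this
      simpa [sub_eq_zero, ContinuousLinearMap.sub_apply] using this
    · have := hAη; rw [hsub] at this
      simpa [sub_eq_zero, ContinuousLinearMap.sub_apply] using this

variable {T : ↥M → ↥M}

lemma map_one' (hT : IsStrongLocalStarAut M T) : T 1 = 1 := by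
  apply Subtype.ext
  apply ContinuousLinearMap.ext
  intro ξ
  obtain ⟨π, h, -⟩ := exists_aut hT 1 ξ ξ
  rw [h, map_one]

lemma map_sa (hT : IsStrongLocalStarAut M T) (a : ↥M) (ha : star a = a) :
    star (T a) = T a := by
  apply Subtype.ext
  show ((star (T a) : ↥M) : H →L[ℂ] H) = ((T a : ↥M) : H →L[ℂ] H)
  set A : H →L[ℂ] H := ((T a : ↥M) : H →L[ℂ] H)
  rw [StarMemClass.coe_star]
  apply eq_of_inner
  intro ξ
  obtain ⟨π, h, -⟩ := exists_aut hT a ξ ξ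
  set B : H →L[ℂ] H := ((π a : ↥M) : H →L[ℂ] H) with hB
  have hBsa : star B = B := by
    rw [hB, ← StarMemClass.coe_star, ← map_star, ha]
  rw [ContinuousLinearMap.star_eq_adjoint, ContinuousLinearMap.adjoint_inner_left, h]
  have : ⟪B ξ, ξ⟫_ℂ = ⟪ξ, B ξ⟫_ℂ := by
    conv_rhs => rw [← hBsa, ContinuousLinearMap.star_eq_adjoint,
      ContinuousLinearMap.adjoint_inner_right]
  rw [this]

lemma half_add_self (m : ↥M) : (2⁻¹ : ℂ) • (m + m) = m := by
  rw [← two_smul ℂ m, smul_smul]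
  norm_num

lemma map_star' (hT : IsStrongLocalStarAut M T) (a : ↥M) : T (star a) = star (T a) := by
  have lin := hT.1
  have hsa1 : star (T (a + star a)) = T (a + star a) :=
    map_sa hT _ (by rw [star_add, star_star, add_comm])
  have hsa2 : star (T (Complex.I • (star a - a))) = T (Complex.I • (star a - a)) := by
    apply map_sa hT
    rw [star_smul, star_sub, star_star, Complex.star_def, Complex.conj_I]
    module
  have h2b : T a + T a
      = T (a + star a) + Complex.I • T (Complex.I • (star a - a)) := by
    rw [lin.map_smul, lin.map_add, lin.map_sub]
    match_scalars <;> simp [Complex.I_sq] <;> ring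
  have h2a : T (star a) + T (star a)
      = T (a + star a) + (-Complex.I) • T (Complex.I • (star a - a)) := by
    rw [lin.map_smul, lin.map_add, lin.map_sub]
    match_scalars <;> simp [Complex.I_sq] <;> ring
  have h3 := congrArg star h2b
  rw [star_add, star_add, star_smul, hsa1, hsa2, Complex.star_def, Complex.conj_I, ← h2a] at h3
  have := congrArg (fun z => (2⁻¹ : ℂ) • z) h3
  simpa only [half_add_self] using this.symm

lemma star_mul_self_eq_one (hT : IsStrongLocalStarAut M T) (u : ↥M) (h : star u * u = 1) :
    star (T u) * T u = 1 := by
  apply Subtype.ext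
  have hco : ((star (T u) * T u : ↥M) : H →L[ℂ] H)
      = star ((T u : ↥M) : H →L[ℂ] H) * ((T u : ↥M) : H →L[ℂ] H) := by
    rw [MulMemClass.coe_mul, StarMemClass.coe_star]
  rw [hco]
  show _ = ((1 : ↥M) : H →L[ℂ] H)
  rw [OneMemClass.coe_one]
  apply eq_of_inner
  intro ξ
  set A : H →L[ℂ] H := ((T u : ↥M) : H →L[ℂ] H) with hA
  obtain ⟨π, hπ, -⟩ := exists_aut hT u ξ ξ
  set B : H →L[ℂ] H := ((π u : ↥M) : H →L[ℂ] H) with hB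
  have hB1 : star B * B = 1 := by
    rw [hB, ← StarMemClass.coe_star, ← MulMemClass.coe_mul, ← map_star, ← map_mul, h, map_one,
      OneMemClass.coe_one]
  rw [ContinuousLinearMap.mul_apply, ContinuousLinearMap.star_eq_adjoint,
    ContinuousLinearMap.adjoint_inner_left]
  show ⟪A ξ, A ξ⟫_ℂ = ⟪(1 : H →L[ℂ] H) ξ, ξ⟫_ℂ
  rw [hπ]
  show ⟪B ξ, B ξ⟫_ℂ = _
  have : ⟪B ξ, B ξ⟫_ℂ = ⟪ξ, (star B * B) ξ⟫_ℂ := by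
    rw [ContinuousLinearMap.mul_apply, ContinuousLinearMap.star_eq_adjoint,
      ContinuousLinearMap.adjoint_inner_right]
  rw [this, hB1, ContinuousLinearMap.one_apply]

lemma mul_star_self_eq_one (hT : IsStrongLocalStarAut M T) (u : ↥M) (h : u * star u = 1) :
    T u * star (T u) = 1 := by
  have h' : star (star u) * star u = 1 := by rw [star_star]; exact h
  have := star_mul_self_eq_one hT (star u) h'
  rwa [map_star' hT, star_star] at this

lemma norm_bound (hT : IsStrongLocalStarAut M T) (a : ↥M) : ‖T a‖ ≤ ‖a‖ := by
  have : ‖((T a : ↥M) : H →L[ℂ] H)‖ ≤ ‖a‖ := by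
    apply ContinuousLinearMap.opNorm_le_bound _ (norm_nonneg a)
    intro ξ
    obtain ⟨π, hπ, -⟩ := exists_aut hT a ξ ξ
    rw [hπ]
    calc ‖((π a : ↥M) : H →L[ℂ] H) ξ‖ ≤ ‖((π a : ↥M) : H →L[ℂ] H)‖ * ‖ξ‖ :=
          ContinuousLinearMap.le_opNorm _ _
    _ = ‖π a‖ * ‖ξ‖ := rfl
    _ = ‖a‖ * ‖ξ‖ := by rw [StarAlgEquiv.norm_map]
  exact this


open NormedSpace in
lemma map_sq_skew (hT : IsStrongLocalStarAut M T) (b : ↥M) (hb : star b = -b) :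
    T (b * b) = T b * T b := by
  have lin := hT.1
  set Tl : ↥M →ₗ[ℂ] ↥M := IsLinearMap.mk' T hT.1 with hTl
  set Tc : ↥M →L[ℂ] ↥M :=
    Tl.mkContinuous 1 (fun a => by rw [one_mul]; exact norm_bound hT a) with hTc
  set Tr : ↥M →L[ℝ] ↥M := Tc.restrictScalars ℝ with hTr
  have hTreq : ∀ x : ↥M, Tr x = T x := fun x => rfl
  have hstar_exp : ∀ t : ℝ, star (exp (t • b)) = exp (t • (-b)) := by
    intro t
    rw [star_exp, star_real_smul, hb]
  have hmul1 : ∀ t : ℝ, exp (t • (-b)) * exp (t • b) = 1 := by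
    intro t
    let +nondep : NormedAlgebra ℚ ↥M := .restrictScalars ℚ ℂ ↥M
    rw [← exp_add_of_commute (((Commute.refl b).neg_left.smul_left t).smul_right t)]
    rw [smul_neg, neg_add_cancel, exp_zero]
  have hmul2 : ∀ t : ℝ, exp (t • b) * exp (t • (-b)) = 1 := by
    intro t
    let +nondep : NormedAlgebra ℚ ↥M := .restrictScalars ℚ ℂ ↥M
    rw [← exp_add_of_commute (((Commute.refl b).neg_right.smul_left t).smul_right t)]
    rw [smul_neg, add_neg_cancel, exp_zero]
  have hG : ∀ t : ℝ, Tr (exp (t • (-b))) * Tr (exp (t • b)) = 1 := by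
    intro t
    have hu1 : star (exp (t • b)) * exp (t • b) = 1 := by rw [hstar_exp]; exact hmul1 t
    have := star_mul_self_eq_one hT _ hu1
    rw [← map_star' hT, hstar_exp] at this
    rw [hTreq, hTreq]
    exact this
  -- first derivatives
  have h1 : ∀ t : ℝ, HasDerivAt (fun s : ℝ => Tr (exp (s • (-b))))
      (Tr (exp (t • (-b)) * (-b))) t := fun t =>
    Tr.hasFDerivAt.comp_hasDerivAt t (hasDerivAt_exp_smul_const (-b) t)
  have h2 : ∀ t : ℝ, HasDerivAt (fun s : ℝ => Tr (exp (s • b)))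
      (Tr (exp (t • b) * b)) t := fun t =>
    Tr.hasFDerivAt.comp_hasDerivAt t (hasDerivAt_exp_smul_const b t)
  have h3 : ∀ t : ℝ, HasDerivAt (fun s : ℝ => Tr (exp (s • (-b)) * (-b)))
      (Tr ((exp (t • (-b)) * (-b)) * (-b))) t := fun t =>
    Tr.hasFDerivAt.comp_hasDerivAt t ((hasDerivAt_exp_smul_const (-b) t).mul_const (-b))
  have h4 : ∀ t : ℝ, HasDerivAt (fun s : ℝ => Tr (exp (s • b) * b))
      (Tr ((exp (t • b) * b) * b)) t := fun t =>
    Tr.hasFDerivAt.comp_hasDerivAt t ((hasDerivAt_exp_smul_const b t).mul_const b)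
  set F : ℝ → ↥M := fun s => Tr (exp (s • (-b)) * (-b)) * Tr (exp (s • b))
      + Tr (exp (s • (-b))) * Tr (exp (s • b) * b) with hF
  have hF0 : ∀ t : ℝ, F t = 0 := by
    intro t
    have hGder : HasDerivAt (fun s : ℝ => Tr (exp (s • (-b))) * Tr (exp (s • b))) (F t) t :=
      (h1 t).mul (h2 t)
    have hconst : (fun s : ℝ => Tr (exp (s • (-b))) * Tr (exp (s • b)))
        = fun _ : ℝ => (1 : ↥M) := funext hG
    rw [hconst] at hGder
    exact hGder.unique (hasDerivAt_const t 1)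
  have hFder : HasDerivAt F
      ((Tr ((exp ((0:ℝ) • (-b)) * (-b)) * (-b)) * Tr (exp ((0:ℝ) • b))
        + Tr (exp ((0:ℝ) • (-b)) * (-b)) * Tr (exp ((0:ℝ) • b) * b))
       + (Tr (exp ((0:ℝ) • (-b)) * (-b)) * Tr (exp ((0:ℝ) • b) * b)
        + Tr (exp ((0:ℝ) • (-b))) * Tr ((exp ((0:ℝ) • b) * b) * b))) 0 :=
    ((h3 0).mul (h2 0)).add ((h1 0).mul (h4 0))
  have hFconst : F = fun _ : ℝ => (0 : ↥M) := funext hF0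
  rw [hFconst] at hFder
  have hD := (hasDerivAt_const (0:ℝ) (0:↥M)).unique hFder
  have hone : Tr (1 : ↥M) = 1 := by rw [hTreq]; exact map_one' hT
  simp only [zero_smul, exp_zero, one_mul, mul_neg, neg_mul, neg_neg, map_neg, mul_one, hone] at hD
  have h2eq : Tr (b * b) + Tr (b * b) = Tr b * Tr b + Tr b * Tr b := by
    have h'' := hD.symm
    calc Tr (b * b) + Tr (b * b)
        = (Tr (b * b) + -(Tr b * Tr b) + (-(Tr b * Tr b) + Tr (b * b)))
          + (Tr b * Tr b + Tr b * Tr b) := by abel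
      _ = 0 + (Tr b * Tr b + Tr b * Tr b) := by rw [h'']
      _ = Tr b * Tr b + Tr b * Tr b := zero_add _
  have := congrArg (fun z => (2⁻¹ : ℂ) • z) h2eq
  simpa only [half_add_self, hTreq] using this

lemma map_sq_sa (hT : IsStrongLocalStarAut M T) (x : ↥M) (hx : star x = x) :
    T (x * x) = T x * T x := by
  have lin := hT.1
  set b : ↥M := Complex.I • x with hbdef
  have hb : star b = -b := by
    rw [hbdef, star_smul, hx, Complex.star_def, Complex.conj_I, neg_smul]
  have hkey := map_sq_skew hT b hb
  have hbb : b * b = -(x * x) := by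
    rw [hbdef, smul_mul_assoc, mul_smul_comm, smul_smul, Complex.I_mul_I, neg_smul, one_smul]
  have hTb : T b = Complex.I • T x := by rw [hbdef, lin.map_smul]
  rw [hbb, lin.map_neg, hTb, smul_mul_assoc, mul_smul_comm, smul_smul, Complex.I_mul_I,
    neg_smul, one_smul, neg_inj] at hkey
  exact hkey

lemma expand_sq (x y : ↥M) : (x + Complex.I • y) * (x + Complex.I • y)
    = x * x - y * y + Complex.I • (x * y + y * x) := by
  simp only [mul_add, add_mul, smul_mul_assoc, mul_smul_comm, smul_smul, Complex.I_mul_I,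
    smul_add, neg_smul, one_smul]
  abel

lemma map_sq (hT : IsStrongLocalStarAut M T) (a : ↥M) : T (a * a) = T a * T a := by
  have lin := hT.1
  set x : ↥M := (2⁻¹ : ℂ) • (a + star a) with hxdef
  set y : ↥M := (2⁻¹ : ℂ) • (Complex.I • (star a - a)) with hydef
  have hx : star x = x := by
    have hconj : star (2⁻¹ : ℂ) = 2⁻¹ := by norm_num
    rw [hxdef, star_smul, star_add, star_star, hconj, add_comm (star a) a]
  have hy : star y = y := by
    have hconj : (starRingEnd ℂ) (2⁻¹ : ℂ) = 2⁻¹ := by rw [map_inv₀, Complex.conj_ofNat]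
    rw [hydef, star_smul, star_smul, star_sub, star_star, Complex.star_def, Complex.conj_I,
      hconj]
    match_scalars <;> ring_nf <;> simp [Complex.I_sq] <;> norm_num
  have hxy : star (x + y) = x + y := by rw [star_add, hx, hy]
  have haxy : a = x + Complex.I • y := by
    rw [hxdef, hydef]
    match_scalars <;> ring_nf <;> simp [Complex.I_sq] <;> norm_num
  have h1 : T (x * x) = T x * T x := map_sq_sa hT x hx
  have h2 : T (y * y) = T y * T y := map_sq_sa hT y hy
  have h3 : T ((x + y) * (x + y)) = T (x + y) * T (x + y) := map_sq_sa hT (x + y) hxy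
  have hmid : T (x * y + y * x) = T x * T y + T y * T x := by
    have hid : x * y + y * x = (x + y) * (x + y) - x * x - y * y := by noncomm_ring
    rw [hid, lin.map_sub, lin.map_sub, h3, h1, h2, lin.map_add]
    noncomm_ring
  have haa : a * a = x * x - y * y + Complex.I • (x * y + y * x) := by
    conv_lhs => rw [haxy]
    exact expand_sq x y
  have hTa : T a = T x + Complex.I • T y := by
    conv_lhs => rw [haxy]
    rw [lin.map_add, lin.map_smul Complex.I y]
  rw [haa, lin.map_add, lin.map_sub, lin.map_smul, h1, h2, hmid, hTa]
  exact (expand_sq (T x) (T y)).symm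

end SLSAProof

/-- Every strong-local `*`-automorphism on a von Neumann algebra is a unital Jordan
`*`-homomorphism; in particular it sends unitaries to unitaries and projections to
projections. -/
theorem strongLocalStarAut_jordan (M : VonNeumannAlgebra H) (T : ↥M → ↥M)
    (hT : IsStrongLocalStarAut M T) :
    T 1 = 1 ∧ (∀ a : ↥M, T (star a) = star (T a)) ∧
      (∀ a : ↥M, T (a * a) = T a * T a) ∧
      (∀ u : ↥M, u * star u = 1 → star u * u = 1 →
        T u * star (T u) = 1 ∧ star (T u) * T u = 1) ∧
      (∀ p : ↥M, star p = p → p * p = p → star (T p) = T p ∧ T p * T p = T p) := by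
  exact ⟨SLSAProof.map_one' hT, fun a => SLSAProof.map_star' hT a,
    fun a => SLSAProof.map_sq hT a,
    fun u h1 h2 => ⟨SLSAProof.mul_star_self_eq_one hT u h1,
      SLSAProof.star_mul_self_eq_one hT u h2⟩,
    fun p h1 h2 => ⟨SLSAProof.map_sa hT p h1, by rw [← SLSAProof.map_sq hT p, h2]⟩⟩
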